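/- Let E and F be Banach spaces. For every m ≥ n, the space 𝒫_w(ⁿE;F) of n-homogeneous polynomials weakly continuous on bounded sets is isomorphic to a closed subspace of 𝒫_w(ᵐE;F). -/

import Mathlib

open NormedSpace Filter Topology

set_option maxHeartbeats 1000000

noncomputable section

/-- The Banach-space adjoint of a continuous linear map. -/
def adj (𝕜 : Type*) {A B : Type*} [RCLike 𝕜] [NormedAddCommGroup A] [NormedSpace 𝕜 A]
    [NormedAddCommGroup B] [NormedSpace 𝕜 B] (T : A →L[𝕜] B) :
    StrongDual 𝕜 B →L[𝕜] StrongDual 𝕜 A :=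
  (ContinuousLinearMap.compL 𝕜 A B 𝕜).flip T

/-- A normed space is reflexive if the canonical embedding into its bidual is surjective. -/
def IsReflexive (𝕜 E : Type*) [RCLike 𝕜] [NormedAddCommGroup E] [NormedSpace 𝕜 E] : Prop :=
  Function.Surjective (inclusionInDoubleDual 𝕜 E)
/-- `f : E → F` is weakly continuous on bounded sets: its restriction to every bounded set
is continuous from the weak topology of `E` to the norm topology of `F`. -/
def WCB (𝕜 E F : Type*) [RCLike 𝕜] [NormedAddCommGroup E] [NormedSpace 𝕜 E]
    [NormedAddCommGroup F] [NormedSpace 𝕜 F] (f : E → F) : Prop :=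
  ∀ B : Set E, Bornology.IsBounded B →
    ContinuousOn (fun x : WeakSpace 𝕜 E => f x) (B : Set (WeakSpace 𝕜 E))

variable (𝕜 E F : Type*) [RCLike 𝕜] [NormedAddCommGroup E] [NormedSpace 𝕜 E]
    [NormedAddCommGroup F] [NormedSpace 𝕜 F]

/-- The space `𝒫(ⁿE;F)` of continuous `n`-homogeneous polynomials, modelled as the space of
continuous symmetric `n`-linear maps (a polynomial being the diagonal of such a map). -/
def Psym (n : ℕ) : Submodule 𝕜 (ContinuousMultilinearMap 𝕜 (fun _ : Fin n => E) F) where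
  carrier := {A | ∀ (σ : Equiv.Perm (Fin n)) (v : Fin n → E), A (v ∘ σ) = A v}
  add_mem' := fun ha hb σ v => by simp [ha σ v, hb σ v]
  zero_mem' := fun σ v => by simp
  smul_mem' := fun c a ha σ v => by simp [ha σ v]

/-- The space `𝒫_w(ⁿE;F)` of continuous `n`-homogeneous polynomials that are weakly continuous
on bounded sets, modelled via symmetric `n`-linear maps whose diagonal is weakly continuous on
bounded sets. -/
def Pw (n : ℕ) : Submodule 𝕜 (ContinuousMultilinearMap 𝕜 (fun _ : Fin n => E) F) where
  carrier := {A | (∀ (σ : Equiv.Perm (Fin n)) (v : Fin n → E), A (v ∘ σ) = A v) ∧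
    WCB 𝕜 E F (fun x => A fun _ => x)}
  add_mem' := fun {a b} ha hb => ⟨fun σ v => by simp [ha.1 σ v, hb.1 σ v],
    fun B hB => (ha.2 B hB).add (hb.2 B hB)⟩
  zero_mem' := ⟨fun σ v => by simp, fun B hB => continuousOn_const (c := (0 : F))⟩
  smul_mem' := fun c a ha => ⟨fun σ v => by simp [ha.1 σ v],
    fun B hB => (ha.2 B hB).const_smul c⟩


namespace Stmt8Aux
open scoped Classical

variable {𝕜 E F : Type*} [RCLike 𝕜] [NormedAddCommGroup E] [NormedSpace 𝕜 E]
    [NormedAddCommGroup F] [NormedSpace 𝕜 F]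

/-- If `A` is symmetric and `h` is an injection `Fin n → Fin (n+1)` avoiding `c`, then
`A (v ∘ h) = A (v ∘ c.succAbove)`. -/
theorem core_perm {n : ℕ} {A : ContinuousMultilinearMap 𝕜 (fun _ : Fin n => E) F}
    (hA : ∀ (σ : Equiv.Perm (Fin n)) (v : Fin n → E), A (v ∘ σ) = A v)
    (v : Fin (n + 1) → E) (h : Fin n → Fin (n + 1)) (hinj : Function.Injective h)
    (c : Fin (n + 1)) (hc : ∀ j, h j ≠ c) :
    A (v ∘ h) = A (v ∘ c.succAbove) := by
  have hex : ∀ j, ∃ z, c.succAbove z = h j := fun j => Fin.exists_succAbove_eq (hc j)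
  choose π₀ hπ₀ using hex
  have hπinj : Function.Injective π₀ := fun a b hab =>
    hinj (by rw [← hπ₀ a, ← hπ₀ b, hab])
  have hbij : Function.Bijective π₀ := Finite.injective_iff_bijective.1 hπinj
  let π : Equiv.Perm (Fin n) := Equiv.ofBijective π₀ hbij
  have hcomp : (v ∘ c.succAbove) ∘ π = v ∘ h := by
    funext j
    simp only [Function.comp_apply]
    rw [show π j = π₀ j from rfl, hπ₀ j]
  rw [← hcomp, hA π]

theorem core_swap {n : ℕ} {A : ContinuousMultilinearMap 𝕜 (fun _ : Fin n => E) F}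
    (hA : ∀ (σ : Equiv.Perm (Fin n)) (v : Fin n → E), A (v ∘ σ) = A v)
    (v : Fin (n + 1) → E) (a b : Fin (n + 1)) (hv : v a = v b) :
    A (v ∘ a.succAbove) = A (v ∘ b.succAbove) := by
  have h1 : v ∘ (Equiv.swap a b) = v := by
    funext x
    rcases eq_or_ne x a with rfl | hxa
    · simp [Equiv.swap_apply_left, hv]
    rcases eq_or_ne x b with rfl | hxb
    · simp [Equiv.swap_apply_right, hv]
    · simp [Equiv.swap_apply_of_ne_of_ne hxa hxb]
  have h2 : A (v ∘ ((Equiv.swap a b : Fin (n+1) → Fin (n+1)) ∘ a.succAbove))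
      = A (v ∘ b.succAbove) := by
    refine core_perm hA v _
      ((Equiv.swap a b).injective.comp Fin.succAbove_right_injective) b (fun j hj => ?_)
    have : a.succAbove j = a := by
      have := congrArg (Equiv.swap a b) hj
      simpa [Equiv.swap_apply_self, Equiv.swap_apply_right] using this
    exact Fin.succAbove_ne a j this
  calc A (v ∘ a.succAbove) = A ((v ∘ (Equiv.swap a b : Fin (n+1) → Fin (n+1))) ∘ a.succAbove) := by
        rw [h1]
    _ = A (v ∘ b.succAbove) := h2

variable (φ : E →L[𝕜] 𝕜)

private lemma update_comp_self {n : ℕ} (v : Fin (n + 1) → E) (p : Fin (n + 1)) (t : E) :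
    Function.update v p t ∘ p.succAbove = v ∘ p.succAbove := by
  funext j
  exact Function.update_of_ne (Fin.succAbove_ne p j) _ _

private lemma update_comp_ne {n : ℕ} {p i : Fin (n + 1)} (hip : i ≠ p) (v : Fin (n + 1) → E) :
    ∃ j0 : Fin n, i.succAbove j0 = p ∧
      ∀ t : E, Function.update v p t ∘ i.succAbove = Function.update (v ∘ i.succAbove) j0 t := by
  obtain ⟨j0, hj0⟩ := Fin.exists_succAbove_eq (Ne.symm hip)
  refine ⟨j0, hj0, fun t => ?_⟩
  funext j
  rcases eq_or_ne j j0 with rfl | hj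
  · simp only [Function.comp_apply]
    rw [hj0]
    simp
  · have hne : i.succAbove j ≠ p := fun hcon =>
      hj (Fin.succAbove_right_injective (hcon.trans hj0.symm))
    simp only [Function.comp_apply]
    rw [Function.update_of_ne hne, Function.update_of_ne hj]
    rfl

private def Tmul {n : ℕ} (A : ContinuousMultilinearMap 𝕜 (fun _ : Fin n => E) F) :
    MultilinearMap 𝕜 (fun _ : Fin (n + 1) => E) F where
  toFun v := ∑ i : Fin (n + 1), φ (v i) • A (v ∘ i.succAbove)
  map_update_add' := by
    intro inst v p x y
    obtain rfl := Subsingleton.elim inst (instDecidableEqFin (n+1))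
    rw [← Finset.sum_add_distrib]
    refine Finset.sum_congr rfl fun i _ => ?_
    rcases eq_or_ne i p with rfl | hip
    · rw [update_comp_self, update_comp_self, update_comp_self]
      simp [map_add, add_smul]
    · obtain ⟨j0, hj0, hupd⟩ := update_comp_ne hip v
      rw [hupd, hupd, hupd, Function.update_of_ne hip, Function.update_of_ne hip,
        Function.update_of_ne hip, A.map_update_add, smul_add]
  map_update_smul' := by
    intro inst v p c x
    obtain rfl := Subsingleton.elim inst (instDecidableEqFin (n+1))
    rw [Finset.smul_sum]
    refine Finset.sum_congr rfl fun i _ => ?_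
    rcases eq_or_ne i p with rfl | hip
    · rw [update_comp_self, update_comp_self]
      simp only [Function.update_self, map_smul, smul_eq_mul, mul_smul]
    · obtain ⟨j0, hj0, hupd⟩ := update_comp_ne hip v
      rw [hupd (c • x), hupd x, Function.update_of_ne hip, Function.update_of_ne hip,
        A.map_update_smul]
      exact smul_comm _ _ _

private lemma Tmul_bound {n : ℕ} (A : ContinuousMultilinearMap 𝕜 (fun _ : Fin n => E) F)
    (v : Fin (n + 1) → E) :
    ‖Tmul φ A v‖ ≤ (((n : ℝ) + 1) * ‖φ‖) * ‖A‖ * ∏ i, ‖v i‖ := by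
  have hterm : ∀ i : Fin (n + 1), ‖φ (v i) • A (v ∘ i.succAbove)‖ ≤ ‖φ‖ * ‖A‖ * ∏ i, ‖v i‖ := by
    intro i
    rw [norm_smul]
    calc ‖φ (v i)‖ * ‖A (v ∘ i.succAbove)‖
        ≤ (‖φ‖ * ‖v i‖) * (‖A‖ * ∏ j : Fin n, ‖v (i.succAbove j)‖) := by
          refine mul_le_mul (φ.le_opNorm _) (A.le_opNorm _) (norm_nonneg _) (by positivity)
      _ = ‖φ‖ * ‖A‖ * (‖v i‖ * ∏ j : Fin n, ‖v (i.succAbove j)‖) := by ring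
      _ = ‖φ‖ * ‖A‖ * ∏ i, ‖v i‖ := by rw [← Fin.prod_univ_succAbove (fun i => ‖v i‖) i]
  calc ‖Tmul φ A v‖ = ‖∑ i : Fin (n + 1), φ (v i) • A (v ∘ i.succAbove)‖ := rfl
    _ ≤ ∑ i : Fin (n + 1), ‖φ (v i) • A (v ∘ i.succAbove)‖ := norm_sum_le _ _
    _ ≤ ∑ _i : Fin (n + 1), ‖φ‖ * ‖A‖ * ∏ i, ‖v i‖ := Finset.sum_le_sum fun i _ => hterm i
    _ = ((n : ℝ) + 1) * (‖φ‖ * ‖A‖ * ∏ i, ‖v i‖) := by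
        rw [Finset.sum_const, Finset.card_univ, Fintype.card_fin, nsmul_eq_mul]
        push_cast; ring
    _ = (((n : ℝ) + 1) * ‖φ‖) * ‖A‖ * ∏ i, ‖v i‖ := by ring

private def Tlin (n : ℕ) : ContinuousMultilinearMap 𝕜 (fun _ : Fin n => E) F →ₗ[𝕜]
    MultilinearMap 𝕜 (fun _ : Fin (n + 1) => E) F where
  toFun A := Tmul φ A
  map_add' A B := by
    ext v
    simp [Tmul, smul_add, Finset.sum_add_distrib]
  map_smul' c A := by
    ext v
    simp only [Tmul, ContinuousMultilinearMap.smul_apply, MultilinearMap.coe_mk,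
      RingHom.id_apply, MultilinearMap.smul_apply, Finset.smul_sum]
    exact Finset.sum_congr rfl fun i _ => smul_comm _ _ _

/-- Multiplication with `φ` followed by symmetrization: the basic step map. -/
def Tclm (n : ℕ) : ContinuousMultilinearMap 𝕜 (fun _ : Fin n => E) F →L[𝕜]
    ContinuousMultilinearMap 𝕜 (fun _ : Fin (n + 1) => E) F :=
  MultilinearMap.mkContinuousLinear (Tlin φ n) (((n : ℝ) + 1) * ‖φ‖)
    (fun A v => Tmul_bound φ A v)

@[simp] lemma Tclm_apply {n : ℕ} (A : ContinuousMultilinearMap 𝕜 (fun _ : Fin n => E) F)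
    (v : Fin (n + 1) → E) :
    Tclm φ n A v = ∑ i : Fin (n + 1), φ (v i) • A (v ∘ i.succAbove) := rfl


lemma Tclm_symm {n : ℕ} {A : ContinuousMultilinearMap 𝕜 (fun _ : Fin n => E) F}
    (hA : ∀ (σ : Equiv.Perm (Fin n)) (v : Fin n → E), A (v ∘ σ) = A v)
    (σ : Equiv.Perm (Fin (n + 1))) (v : Fin (n + 1) → E) :
    Tclm φ n A (v ∘ σ) = Tclm φ n A v := by
  rw [Tclm_apply, Tclm_apply, ← Equiv.sum_comp σ (fun i => φ (v i) • A (v ∘ i.succAbove))]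
  refine Finset.sum_congr rfl fun i _ => ?_
  congr 1
  exact core_perm hA v ((σ : Fin (n+1) → Fin (n+1)) ∘ i.succAbove)
    (σ.injective.comp Fin.succAbove_right_injective) (σ i)
    (fun j hj => Fin.succAbove_ne i j (σ.injective hj))

lemma wcb_Tclm {n : ℕ} {A : ContinuousMultilinearMap 𝕜 (fun _ : Fin n => E) F}
    (hA : WCB 𝕜 E F (fun x => A fun _ => x)) :
    WCB 𝕜 E F (fun x => Tclm φ n A fun _ => x) := by
  intro B hB
  have hφc : Continuous fun x : WeakSpace 𝕜 E => φ x :=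
    WeakBilin.eval_continuous ((topDualPairing 𝕜 E).flip) φ
  have hrw : (fun x : WeakSpace 𝕜 E => Tclm φ n A fun _ => x)
      = fun x : WeakSpace 𝕜 E => ∑ _i : Fin (n + 1), φ x • A (fun _ => x) := rfl
  rw [hrw]
  exact continuousOn_finset_sum _ fun i _ => (hφc.continuousOn).smul (hA B hB)

variable (y : E)

lemma T_cons {n : ℕ} (A : ContinuousMultilinearMap 𝕜 (fun _ : Fin n => E) F) (x : Fin n → E) :
    Tclm φ n A (Fin.cons y x) =
      φ y • A x + ∑ j : Fin n, φ (x j) • A (Fin.cons y x ∘ (j.succ).succAbove) := by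
  rw [Tclm_apply, Fin.sum_univ_succ]
  have h1 : (Fin.cons y x : Fin (n + 1) → E) ∘ (0 : Fin (n + 1)).succAbove = x := by
    funext j
    simp [Fin.succAbove_zero]
  simp only [Fin.cons_zero, Fin.cons_succ, h1]

lemma A_drop {n : ℕ} {A : ContinuousMultilinearMap 𝕜 (fun _ : Fin n => E) F}
    (hA : ∀ (σ : Equiv.Perm (Fin n)) (v : Fin n → E), A (v ∘ σ) = A v)
    (x : Fin n → E) (j : Fin n) (hxj : x j = y) :
    A (Fin.cons y x ∘ (j.succ).succAbove) = A x := by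
  have h := core_swap hA (Fin.cons y x) j.succ 0 (by simp [hxj])
  rw [h]
  have h1 : (Fin.cons y x : Fin (n + 1) → E) ∘ (0 : Fin (n + 1)).succAbove = x := by
    funext l
    simp [Fin.succAbove_zero]
  rw [h1]

lemma key_bound (hφ : ‖φ‖ ≤ 1) (hy : φ y = 1) (hy1 : ‖y‖ = 1)
    {n : ℕ} {A : ContinuousMultilinearMap 𝕜 (fun _ : Fin n => E) F}
    (hA : ∀ (σ : Equiv.Perm (Fin n)) (v : Fin n → E), A (v ∘ σ) = A v)
    (x : Fin n → E) (hx : ∀ i, x i = y ∨ ‖x i‖ ≤ 1) :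
    ‖A x‖ ≤ ‖Tclm φ n A‖
      + ∑ j ∈ Finset.univ.filter (fun j => ¬ x j = y),
          ‖A (Fin.cons y x ∘ (j.succ).succAbove)‖ := by
  classical
  set c := (Finset.univ.filter (fun j => x j = y)).card with hc
  have hsum : ∑ j : Fin n, φ (x j) • A (Fin.cons y x ∘ (j.succ).succAbove)
      = (c : 𝕜) • A x + ∑ j ∈ Finset.univ.filter (fun j => ¬ x j = y),
          φ (x j) • A (Fin.cons y x ∘ (j.succ).succAbove) := by
    rw [← Finset.sum_filter_add_sum_filter_not Finset.univ (fun j => x j = y)]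
    congr 1
    calc ∑ j ∈ Finset.univ.filter (fun j => x j = y),
          φ (x j) • A (Fin.cons y x ∘ (j.succ).succAbove)
        = ∑ _j ∈ Finset.univ.filter (fun j => x j = y), A x := by
          refine Finset.sum_congr rfl fun j hj => ?_
          have hxj : x j = y := (Finset.mem_filter.1 hj).2
          rw [hxj, hy, one_smul, A_drop y hA x j hxj]
      _ = (c : 𝕜) • A x := by
          rw [Finset.sum_const, ← hc, Nat.cast_smul_eq_nsmul]
  have hid : Tclm φ n A (Fin.cons y x) = ((c : 𝕜) + 1) • A x
      + ∑ j ∈ Finset.univ.filter (fun j => ¬ x j = y),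
          φ (x j) • A (Fin.cons y x ∘ (j.succ).succAbove) := by
    rw [T_cons, hy, one_smul, hsum, add_smul, one_smul]
    abel
  have h1 : ((c : 𝕜) + 1) • A x = Tclm φ n A (Fin.cons y x)
      - ∑ j ∈ Finset.univ.filter (fun j => ¬ x j = y),
          φ (x j) • A (Fin.cons y x ∘ (j.succ).succAbove) :=
    eq_sub_of_add_eq hid.symm
  have h0 : ‖A x‖ ≤ ‖((c : 𝕜) + 1) • A x‖ := by
    rw [norm_smul]
    have hn : ‖((c : 𝕜) + 1)‖ = (c : ℝ) + 1 := by
      have : ((c : 𝕜) + 1) = ((c + 1 : ℕ) : 𝕜) := by push_cast; ring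
      rw [this, RCLike.norm_natCast]
      push_cast; ring
    rw [hn]
    nlinarith [norm_nonneg (A x), Nat.cast_nonneg (α := ℝ) c, mul_nonneg (Nat.cast_nonneg (α := ℝ) c) (norm_nonneg (A x))]
  have hTv : ‖Tclm φ n A (Fin.cons y x)‖ ≤ ‖Tclm φ n A‖ := by
    have hv1 : ∀ i : Fin (n + 1), ‖(Fin.cons y x : Fin (n+1) → E) i‖ ≤ 1 := by
      intro i
      induction i using Fin.cases with
      | zero => simp [hy1]
      | succ l =>
        rw [Fin.cons_succ]
        rcases hx l with h | h
        · rw [h, hy1]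
        · exact h
    calc ‖Tclm φ n A (Fin.cons y x)‖
        ≤ ‖Tclm φ n A‖ * ∏ i, ‖(Fin.cons y x : Fin (n+1) → E) i‖ := (Tclm φ n A).le_opNorm _
      _ ≤ ‖Tclm φ n A‖ * 1 := by
          refine mul_le_mul_of_nonneg_left ?_ (norm_nonneg _)
          exact Finset.prod_le_one (fun i _ => norm_nonneg _) (fun i _ => hv1 i)
      _ = ‖Tclm φ n A‖ := mul_one _
  have hS : ‖∑ j ∈ Finset.univ.filter (fun j => ¬ x j = y),
        φ (x j) • A (Fin.cons y x ∘ (j.succ).succAbove)‖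
      ≤ ∑ j ∈ Finset.univ.filter (fun j => ¬ x j = y),
          ‖A (Fin.cons y x ∘ (j.succ).succAbove)‖ := by
    refine (norm_sum_le _ _).trans (Finset.sum_le_sum fun j hj => ?_)
    have hxj : ¬ x j = y := (Finset.mem_filter.1 hj).2
    have hxle : ‖x j‖ ≤ 1 := (hx j).resolve_left hxj
    rw [norm_smul]
    have : ‖φ (x j)‖ ≤ 1 := by
      calc ‖φ (x j)‖ ≤ ‖φ‖ * ‖x j‖ := φ.le_opNorm _
        _ ≤ 1 * 1 := mul_le_mul hφ hxle (norm_nonneg _) zero_le_one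
        _ = 1 := mul_one 1
    calc ‖φ (x j)‖ * ‖A (Fin.cons y x ∘ (j.succ).succAbove)‖
        ≤ 1 * ‖A (Fin.cons y x ∘ (j.succ).succAbove)‖ :=
          mul_le_mul_of_nonneg_right this (norm_nonneg _)
      _ = _ := one_mul _
  calc ‖A x‖ ≤ ‖((c : 𝕜) + 1) • A x‖ := h0
    _ ≤ ‖Tclm φ n A (Fin.cons y x)‖ + ‖∑ j ∈ Finset.univ.filter (fun j => ¬ x j = y),
          φ (x j) • A (Fin.cons y x ∘ (j.succ).succAbove)‖ := by
        rw [h1]; exact norm_sub_le _ _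
    _ ≤ ‖Tclm φ n A‖ + ∑ j ∈ Finset.univ.filter (fun j => ¬ x j = y),
          ‖A (Fin.cons y x ∘ (j.succ).succAbove)‖ := add_le_add hTv hS

lemma norm_apply_le (hφ : ‖φ‖ ≤ 1) (hy : φ y = 1) (hy1 : ‖y‖ = 1)
    {n : ℕ} {A : ContinuousMultilinearMap 𝕜 (fun _ : Fin n => E) F}
    (hA : ∀ (σ : Equiv.Perm (Fin n)) (v : Fin n → E), A (v ∘ σ) = A v) :
    ∀ (s : ℕ) (x : Fin n → E), (∀ i, x i = y ∨ ‖x i‖ ≤ 1) →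
      (Finset.univ.filter (fun j => ¬ x j = y)).card ≤ s →
      ‖A x‖ ≤ ((n : ℝ) + 1) ^ s * ‖Tclm φ n A‖ := by
  intro s
  induction s with
  | zero =>
    intro x hx hcard
    have hempty : Finset.univ.filter (fun j => ¬ x j = y) = ∅ :=
      Finset.card_eq_zero.1 (Nat.le_zero.1 hcard)
    have hk := key_bound φ y hφ hy hy1 hA x hx
    rw [hempty, Finset.sum_empty, add_zero] at hk
    rw [pow_zero, one_mul]
    exact hk
  | succ s ih =>
    intro x hx hcard
    have hk := key_bound φ y hφ hy hy1 hA x hx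
    have hTnn : 0 ≤ ‖Tclm φ n A‖ := norm_nonneg _
    have hterm : ∀ j ∈ Finset.univ.filter (fun j => ¬ x j = y),
        ‖A (Fin.cons y x ∘ (j.succ).succAbove)‖ ≤ ((n : ℝ) + 1) ^ s * ‖Tclm φ n A‖ := by
      intro j hj
      have hxj : ¬ x j = y := (Finset.mem_filter.1 hj).2
      have hv : ∀ i : Fin (n + 1), (Fin.cons y x : Fin (n+1) → E) i = y ∨
          ‖(Fin.cons y x : Fin (n+1) → E) i‖ ≤ 1 := by
        intro i
        induction i using Fin.cases with
        | zero => left; simp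
        | succ l => rw [Fin.cons_succ]; exact hx l
      have hx'cond : ∀ l, (Fin.cons y x ∘ (j.succ).succAbove) l = y ∨
          ‖(Fin.cons y x ∘ (j.succ).succAbove) l‖ ≤ 1 := fun l => hv _
      have himg : Finset.univ.filter (fun i : Fin (n + 1) => ¬ (Fin.cons y x : Fin (n+1) → E) i = y)
          = (Finset.univ.filter (fun j => ¬ x j = y)).image Fin.succ := by
        ext i
        induction i using Fin.cases with
        | zero => simp [Fin.succ_ne_zero]
        | succ l =>
          simp only [Finset.mem_filter, Finset.mem_univ, true_and, Finset.mem_image,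
            Fin.cons_succ, Fin.succ_inj]
          constructor
          · exact fun h => ⟨l, h, rfl⟩
          · rintro ⟨a, ha, rfl⟩; exact ha
      have hc1 : (Finset.univ.filter (fun i : Fin (n + 1) =>
            ¬ (Fin.cons y x : Fin (n+1) → E) i = y)).card
          = (Finset.univ.filter (fun j => ¬ x j = y)).card := by
        rw [himg, Finset.card_image_of_injective _ (Fin.succ_injective n)]
      have hjmem : j.succ ∈ Finset.univ.filter (fun i : Fin (n + 1) =>
          ¬ (Fin.cons y x : Fin (n+1) → E) i = y) := by
        simp [Fin.cons_succ, hxj]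
      have hsub : (Finset.univ.filter (fun l => ¬ (Fin.cons y x ∘ (j.succ).succAbove) l = y)).image
            (j.succ).succAbove
          ⊆ (Finset.univ.filter (fun i : Fin (n + 1) =>
              ¬ (Fin.cons y x : Fin (n+1) → E) i = y)).erase j.succ := by
        intro i hi
        obtain ⟨l, hl, rfl⟩ := Finset.mem_image.1 hi
        refine Finset.mem_erase.2 ⟨Fin.succAbove_ne _ _, Finset.mem_filter.2
          ⟨Finset.mem_univ _, (Finset.mem_filter.1 hl).2⟩⟩
      have hcard' : (Finset.univ.filter
          (fun l => ¬ (Fin.cons y x ∘ (j.succ).succAbove) l = y)).card ≤ s := by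
        calc (Finset.univ.filter (fun l => ¬ (Fin.cons y x ∘ (j.succ).succAbove) l = y)).card
            = ((Finset.univ.filter (fun l => ¬ (Fin.cons y x ∘ (j.succ).succAbove) l = y)).image
                (j.succ).succAbove).card :=
              (Finset.card_image_of_injective _ Fin.succAbove_right_injective).symm
          _ ≤ ((Finset.univ.filter (fun i : Fin (n + 1) =>
                ¬ (Fin.cons y x : Fin (n+1) → E) i = y)).erase j.succ).card :=
              Finset.card_le_card hsub
          _ = (Finset.univ.filter (fun i : Fin (n + 1) =>
                ¬ (Fin.cons y x : Fin (n+1) → E) i = y)).card - 1 :=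
              Finset.card_erase_of_mem hjmem
          _ = (Finset.univ.filter (fun j => ¬ x j = y)).card - 1 := by rw [hc1]
          _ ≤ s := by omega
      exact ih _ hx'cond hcard'
    have hsum_le : ∑ j ∈ Finset.univ.filter (fun j => ¬ x j = y),
        ‖A (Fin.cons y x ∘ (j.succ).succAbove)‖
        ≤ (n : ℝ) * (((n : ℝ) + 1) ^ s * ‖Tclm φ n A‖) := by
      calc ∑ j ∈ Finset.univ.filter (fun j => ¬ x j = y),
          ‖A (Fin.cons y x ∘ (j.succ).succAbove)‖
          ≤ (Finset.univ.filter (fun j => ¬ x j = y)).card •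
            (((n : ℝ) + 1) ^ s * ‖Tclm φ n A‖) := Finset.sum_le_card_nsmul _ _ _ hterm
        _ = ((Finset.univ.filter (fun j => ¬ x j = y)).card : ℝ) *
            (((n : ℝ) + 1) ^ s * ‖Tclm φ n A‖) := nsmul_eq_mul _ _
        _ ≤ (n : ℝ) * (((n : ℝ) + 1) ^ s * ‖Tclm φ n A‖) := by
            refine mul_le_mul_of_nonneg_right ?_ (by positivity)
            have : (Finset.univ.filter (fun j => ¬ x j = y)).card ≤ n := by
              calc (Finset.univ.filter (fun j => ¬ x j = y)).card
                  ≤ (Finset.univ : Finset (Fin n)).card := Finset.card_filter_le _ _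
                _ = n := by simp
            exact_mod_cast this
    have hpow : (1 : ℝ) ≤ ((n : ℝ) + 1) ^ s :=
      one_le_pow₀ (by linarith [Nat.cast_nonneg (α := ℝ) n])
    calc ‖A x‖ ≤ ‖Tclm φ n A‖ + ∑ j ∈ Finset.univ.filter (fun j => ¬ x j = y),
          ‖A (Fin.cons y x ∘ (j.succ).succAbove)‖ := hk
      _ ≤ ‖Tclm φ n A‖ + (n : ℝ) * (((n : ℝ) + 1) ^ s * ‖Tclm φ n A‖) :=
          add_le_add_right hsum_le _
      _ ≤ ((n : ℝ) + 1) ^ (s + 1) * ‖Tclm φ n A‖ := by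
          rw [pow_succ]
          nlinarith [mul_nonneg (sub_nonneg.2 hpow) hTnn, Nat.cast_nonneg (α := ℝ) n,
            mul_nonneg (mul_nonneg (Nat.cast_nonneg (α := ℝ) n) (sub_nonneg.2 hpow)) hTnn]

lemma Tclm_lower (hφ : ‖φ‖ ≤ 1) (hy : φ y = 1) (hy1 : ‖y‖ = 1)
    {n : ℕ} {A : ContinuousMultilinearMap 𝕜 (fun _ : Fin n => E) F}
    (hA : ∀ (σ : Equiv.Perm (Fin n)) (v : Fin n → E), A (v ∘ σ) = A v) :
    ‖A‖ ≤ ((n : ℝ) + 1) ^ n * ‖Tclm φ n A‖ := by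
  refine ContinuousMultilinearMap.opNorm_le_bound (by positivity) (fun v => ?_)
  by_cases hz : ∃ i, v i = 0
  · obtain ⟨i, hi⟩ := hz
    rw [A.map_coord_zero i hi, norm_zero]
    positivity
  · push_neg at hz
    set c : Fin n → 𝕜 := fun i => ((‖v i‖ : ℝ) : 𝕜) with hcdef
    have hc0 : ∀ i, c i ≠ 0 := fun i => by
      simp only [hcdef, ne_eq, RCLike.ofReal_eq_zero, norm_eq_zero]
      exact hz i
    set u : Fin n → E := fun i => (c i)⁻¹ • v i with hudef
    have hu1 : ∀ i, ‖u i‖ ≤ 1 := by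
      intro i
      rw [hudef]
      simp only [norm_smul, norm_inv]
      rw [hcdef]
      simp only [RCLike.norm_ofReal, abs_of_nonneg (norm_nonneg (v i))]
      rw [inv_mul_cancel₀ (norm_ne_zero_iff.2 (hz i))]
    have hAv : A v = (∏ i, c i) • A u := by
      have hvc : v = fun i => c i • u i := by
        funext i
        rw [hudef]
        simp only []
        rw [smul_inv_smul₀ (hc0 i)]
      conv_lhs => rw [hvc]
      exact A.map_smul_univ c u
    rw [hAv, norm_smul]
    have hnc : ‖∏ i, c i‖ = ∏ i, ‖v i‖ := by
      rw [norm_prod]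
      refine Finset.prod_congr rfl fun i _ => ?_
      rw [hcdef]
      simp [RCLike.norm_ofReal, abs_of_nonneg (norm_nonneg (v i))]
    rw [hnc]
    have hb := norm_apply_le φ y hφ hy hy1 hA n u (fun i => Or.inr (hu1 i))
      ((Finset.card_filter_le _ _).trans (by simp))
    calc (∏ i, ‖v i‖) * ‖A u‖
        ≤ (∏ i, ‖v i‖) * (((n : ℝ) + 1) ^ n * ‖Tclm φ n A‖) := by
          refine mul_le_mul_of_nonneg_left hb (by positivity)
      _ = ((n : ℝ) + 1) ^ n * ‖Tclm φ n A‖ * ∏ i, ‖v i‖ := by ring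

private lemma pw_update_mem {n : ℕ} (S : Finset (Fin n)) {p : Fin n} (hp : p ∈ S)
    (x : Fin n → E) (t : E) :
    (S.piecewise (fun _ => y)
        (fun i => Function.update x p t i - φ (Function.update x p t i) • y))
      = S.piecewise (fun _ => y) (fun i => x i - φ (x i) • y) := by
  funext i
  by_cases hiS : i ∈ S
  · rw [Finset.piecewise_eq_of_mem _ _ _ hiS, Finset.piecewise_eq_of_mem _ _ _ hiS]
  · have hip : i ≠ p := fun h => hiS (by rw [h]; exact hp)
    rw [Finset.piecewise_eq_of_notMem _ _ _ hiS, Finset.piecewise_eq_of_notMem _ _ _ hiS,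
      Function.update_of_ne hip]

private lemma pw_update_not_mem {n : ℕ} (S : Finset (Fin n)) {p : Fin n} (hp : p ∉ S)
    (x : Fin n → E) (t : E) :
    (S.piecewise (fun _ => y)
        (fun i => Function.update x p t i - φ (Function.update x p t i) • y))
      = Function.update (S.piecewise (fun _ => y) (fun i => x i - φ (x i) • y)) p
          (t - φ t • y) := by
  funext i
  by_cases hiS : i ∈ S
  · have hip : i ≠ p := fun h => hp (by rw [← h]; exact hiS)
    rw [Finset.piecewise_eq_of_mem _ _ _ hiS, Function.update_of_ne hip,
      Finset.piecewise_eq_of_mem _ _ _ hiS]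
  · rcases eq_or_ne i p with rfl | hip
    · rw [Finset.piecewise_eq_of_notMem _ _ _ hiS, Function.update_self,
        Function.update_self]
    · rw [Finset.piecewise_eq_of_notMem _ _ _ hiS, Function.update_of_ne hip,
        Function.update_of_ne hip, Finset.piecewise_eq_of_notMem _ _ _ hiS]

private lemma prod_update_mem {n : ℕ} (S : Finset (Fin n)) {p : Fin n} (hp : p ∈ S)
    (x : Fin n → E) (t : E) :
    (∏ i ∈ S, φ (Function.update x p t i)) = φ t * ∏ i ∈ S \ {p}, φ (x i) := by
  have he : (fun i => φ (Function.update x p t i))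
      = Function.update (fun i => φ (x i)) p (φ t) := by
    funext i
    exact Function.apply_update (fun _ s => φ s) x p t i
  rw [Finset.prod_congr rfl (fun i _ => congrFun he i), Finset.prod_update_of_mem hp]

private lemma prod_update_not_mem {n : ℕ} (S : Finset (Fin n)) {p : Fin n} (hp : p ∉ S)
    (x : Fin n → E) (t : E) :
    (∏ i ∈ S, φ (Function.update x p t i)) = ∏ i ∈ S, φ (x i) :=
  Finset.prod_congr rfl fun i hi => by
    rw [Function.update_of_ne (fun h => hp (by rw [← h]; exact hi))]

private def rMul {n : ℕ} (B : ContinuousMultilinearMap 𝕜 (fun _ : Fin (n + 1) => E) F) :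
    MultilinearMap 𝕜 (fun _ : Fin n => E) F where
  toFun x := ∑ S : Finset (Fin n), ((S.card : 𝕜) + 1)⁻¹ •
    ((∏ i ∈ S, φ (x i)) •
      B (Fin.cons y (S.piecewise (fun _ => y) (fun i => x i - φ (x i) • y))))
  map_update_add' := by
    intro inst x p a b
    obtain rfl := Subsingleton.elim inst (instDecidableEqFin n)
    rw [← Finset.sum_add_distrib]
    refine Finset.sum_congr rfl fun S _ => ?_
    by_cases hp : p ∈ S
    · rw [pw_update_mem φ y S hp x a, pw_update_mem φ y S hp x b, pw_update_mem φ y S hp x (a+b),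
        prod_update_mem φ S hp x a, prod_update_mem φ S hp x b,
        prod_update_mem φ S hp x (a+b), map_add, add_mul, add_smul, smul_add]
    · have hsub : a + b - φ (a + b) • y = (a - φ a • y) + (b - φ b • y) := by
        rw [map_add, add_smul]
        abel
      rw [pw_update_not_mem φ y S hp x a, pw_update_not_mem φ y S hp x b,
        pw_update_not_mem φ y S hp x (a+b),
        prod_update_not_mem φ S hp x a, prod_update_not_mem φ S hp x b,
        prod_update_not_mem φ S hp x (a+b),
        Fin.cons_update, Fin.cons_update, Fin.cons_update, hsub,
        B.map_update_add, smul_add, smul_add]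
  map_update_smul' := by
    intro inst x p c a
    obtain rfl := Subsingleton.elim inst (instDecidableEqFin n)
    rw [Finset.smul_sum]
    refine Finset.sum_congr rfl fun S _ => ?_
    by_cases hp : p ∈ S
    · rw [pw_update_mem φ y S hp x a, pw_update_mem φ y S hp x (c • a),
        prod_update_mem φ S hp x a, prod_update_mem φ S hp x (c • a), map_smul]
      simp only [smul_smul, smul_eq_mul]
      congr 1
      ring
    · have hsub : c • a - φ (c • a) • y = c • (a - φ a • y) := by
        rw [map_smul, smul_eq_mul, mul_smul, ← smul_sub]
      rw [pw_update_not_mem φ y S hp x a, pw_update_not_mem φ y S hp x (c • a),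
        prod_update_not_mem φ S hp x a, prod_update_not_mem φ S hp x (c • a),
        Fin.cons_update, Fin.cons_update, hsub, B.map_update_smul]
      simp only [smul_smul]
      congr 1
      ring

private lemma rMul_bound (hφ : ‖φ‖ ≤ 1) (hy1 : ‖y‖ = 1) {n : ℕ}
    (B : ContinuousMultilinearMap 𝕜 (fun _ : Fin (n + 1) => E) F) (x : Fin n → E) :
    ‖rMul φ y B x‖ ≤ ((2 : ℝ) ^ n * 2 ^ n) * ‖B‖ * ∏ i, ‖x i‖ := by
  have hterm : ∀ S : Finset (Fin n),
      ‖((S.card : 𝕜) + 1)⁻¹ • ((∏ i ∈ S, φ (x i)) •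
        B (Fin.cons y (S.piecewise (fun _ => y) (fun i => x i - φ (x i) • y))))‖
      ≤ (2 : ℝ) ^ n * ‖B‖ * ∏ i, ‖x i‖ := by
    intro S
    set w : Fin n → E := S.piecewise (fun _ => y) (fun i => x i - φ (x i) • y) with hwdef
    have hinv : ‖((S.card : 𝕜) + 1)⁻¹‖ ≤ 1 := by
      rw [norm_inv]
      have h1 : (1 : ℝ) ≤ ‖((S.card : 𝕜) + 1)‖ := by
        have he : ((S.card : 𝕜) + 1) = ((S.card + 1 : ℕ) : 𝕜) := by push_cast; ring
        rw [he, RCLike.norm_natCast]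
        exact_mod_cast Nat.succ_le_succ (Nat.zero_le _)
      exact inv_le_one_of_one_le₀ h1
    have hprodφ : ‖∏ i ∈ S, φ (x i)‖ ≤ ∏ i ∈ S, ‖x i‖ := by
      rw [norm_prod]
      refine Finset.prod_le_prod (fun i _ => norm_nonneg _) (fun i _ => ?_)
      calc ‖φ (x i)‖ ≤ ‖φ‖ * ‖x i‖ := φ.le_opNorm _
        _ ≤ 1 * ‖x i‖ := mul_le_mul_of_nonneg_right hφ (norm_nonneg _)
        _ = ‖x i‖ := one_mul _
    have hprodcons : ∏ i, ‖(Fin.cons y w : Fin (n+1) → E) i‖ = ∏ i, ‖w i‖ := by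
      rw [Fin.prod_univ_succ]
      simp [hy1]
    have hB : ‖B (Fin.cons y w)‖ ≤ ‖B‖ * ∏ i, ‖w i‖ := by
      refine (B.le_opNorm _).trans ?_
      rw [hprodcons]
    have hz : ∀ i, i ∉ S → ‖w i‖ ≤ 2 * ‖x i‖ := by
      intro i hi
      rw [hwdef, Finset.piecewise_eq_of_notMem _ _ _ hi]
      calc ‖x i - φ (x i) • y‖ ≤ ‖x i‖ + ‖φ (x i) • y‖ := norm_sub_le _ _
        _ = ‖x i‖ + ‖φ (x i)‖ := by rw [norm_smul, hy1, mul_one]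
        _ ≤ ‖x i‖ + ‖x i‖ := by
            refine add_le_add_right ?_ _
            calc ‖φ (x i)‖ ≤ ‖φ‖ * ‖x i‖ := φ.le_opNorm _
              _ ≤ 1 * ‖x i‖ := mul_le_mul_of_nonneg_right hφ (norm_nonneg _)
              _ = ‖x i‖ := one_mul _
        _ = 2 * ‖x i‖ := by ring
    have hwS : ∀ i ∈ S, ‖w i‖ = 1 := fun i hi => by
      rw [hwdef, Finset.piecewise_eq_of_mem _ _ _ hi, hy1]
    have hmain : (∏ i ∈ S, ‖x i‖) * ∏ i, ‖w i‖ ≤ (2:ℝ) ^ n * ∏ i, ‖x i‖ := by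
      calc (∏ i ∈ S, ‖x i‖) * ∏ i, ‖w i‖
          = (∏ i ∈ S, ‖x i‖) * ((∏ i ∈ S, ‖w i‖) * ∏ i ∈ Sᶜ, ‖w i‖) := by
            rw [Finset.prod_mul_prod_compl]
        _ = (∏ i ∈ S, ‖x i‖) * ∏ i ∈ Sᶜ, ‖w i‖ := by
            rw [Finset.prod_congr rfl hwS, Finset.prod_const_one, one_mul]
        _ ≤ (∏ i ∈ S, 2 * ‖x i‖) * ∏ i ∈ Sᶜ, 2 * ‖x i‖ := by
            refine mul_le_mul ?_ ?_ ?_ ?_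
            · refine Finset.prod_le_prod (fun i _ => norm_nonneg _) (fun i _ => ?_)
              nlinarith [norm_nonneg (x i)]
            · refine Finset.prod_le_prod (fun i _ => norm_nonneg _) (fun i hi => ?_)
              exact hz i (Finset.mem_compl.1 hi)
            · exact Finset.prod_nonneg (fun i _ => norm_nonneg _)
            · exact Finset.prod_nonneg (fun i _ => by positivity)
        _ = ∏ i, 2 * ‖x i‖ := Finset.prod_mul_prod_compl _ _
        _ = (2:ℝ) ^ n * ∏ i, ‖x i‖ := by
            rw [Finset.prod_mul_distrib, Finset.prod_const, Finset.card_univ, Fintype.card_fin]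
    calc ‖((S.card : 𝕜) + 1)⁻¹ • ((∏ i ∈ S, φ (x i)) • B (Fin.cons y w))‖
        = ‖((S.card : 𝕜) + 1)⁻¹‖ * (‖∏ i ∈ S, φ (x i)‖ * ‖B (Fin.cons y w)‖) := by
          rw [norm_smul, norm_smul]
      _ ≤ 1 * ((∏ i ∈ S, ‖x i‖) * (‖B‖ * ∏ i, ‖w i‖)) := by
          refine mul_le_mul hinv (mul_le_mul hprodφ hB (norm_nonneg _)
            (Finset.prod_nonneg fun i _ => norm_nonneg _)) ?_ zero_le_one
          positivity
      _ = ‖B‖ * ((∏ i ∈ S, ‖x i‖) * ∏ i, ‖w i‖) := by ring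
      _ ≤ ‖B‖ * ((2:ℝ) ^ n * ∏ i, ‖x i‖) := by
          refine mul_le_mul_of_nonneg_left hmain (norm_nonneg _)
      _ = (2 : ℝ) ^ n * ‖B‖ * ∏ i, ‖x i‖ := by ring
  calc ‖rMul φ y B x‖
      = ‖∑ S : Finset (Fin n), ((S.card : 𝕜) + 1)⁻¹ • ((∏ i ∈ S, φ (x i)) •
          B (Fin.cons y (S.piecewise (fun _ => y) (fun i => x i - φ (x i) • y))))‖ := rfl
    _ ≤ ∑ S : Finset (Fin n), ‖((S.card : 𝕜) + 1)⁻¹ • ((∏ i ∈ S, φ (x i)) •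
          B (Fin.cons y (S.piecewise (fun _ => y) (fun i => x i - φ (x i) • y))))‖ :=
        norm_sum_le _ _
    _ ≤ ∑ _S : Finset (Fin n), (2 : ℝ) ^ n * ‖B‖ * ∏ i, ‖x i‖ :=
        Finset.sum_le_sum fun S _ => hterm S
    _ = (2 : ℝ) ^ n * ((2 : ℝ) ^ n * ‖B‖ * ∏ i, ‖x i‖) := by
        rw [Finset.sum_const, Finset.card_univ, Fintype.card_finset, Fintype.card_fin,
          nsmul_eq_mul]
        push_cast
        ring
    _ = ((2 : ℝ) ^ n * 2 ^ n) * ‖B‖ * ∏ i, ‖x i‖ := by ring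

private def rlin (n : ℕ) : ContinuousMultilinearMap 𝕜 (fun _ : Fin (n + 1) => E) F →ₗ[𝕜]
    MultilinearMap 𝕜 (fun _ : Fin n => E) F where
  toFun B := rMul φ y B
  map_add' B C := by
    ext x
    simp [rMul, ContinuousMultilinearMap.add_apply, smul_add, Finset.sum_add_distrib]
  map_smul' c B := by
    ext x
    simp only [rMul, ContinuousMultilinearMap.smul_apply, MultilinearMap.coe_mk,
      RingHom.id_apply, MultilinearMap.smul_apply, Finset.smul_sum]
    refine Finset.sum_congr rfl fun S _ => ?_
    simp only [smul_smul]
    congr 1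
    ring

/-- The retraction map. -/
def rclm (hφ : ‖φ‖ ≤ 1) (hy1 : ‖y‖ = 1) (n : ℕ) :
    ContinuousMultilinearMap 𝕜 (fun _ : Fin (n + 1) => E) F →L[𝕜]
    ContinuousMultilinearMap 𝕜 (fun _ : Fin n => E) F :=
  MultilinearMap.mkContinuousLinear (rlin φ y n) ((2 : ℝ) ^ n * 2 ^ n)
    (fun B x => rMul_bound φ y hφ hy1 B x)

@[simp] lemma rclm_apply (hφ : ‖φ‖ ≤ 1) (hy1 : ‖y‖ = 1) {n : ℕ}
    (B : ContinuousMultilinearMap 𝕜 (fun _ : Fin (n + 1) => E) F) (x : Fin n → E) :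
    rclm φ y hφ hy1 n B x = ∑ S : Finset (Fin n), ((S.card : 𝕜) + 1)⁻¹ •
      ((∏ i ∈ S, φ (x i)) •
        B (Fin.cons y (S.piecewise (fun _ => y) (fun i => x i - φ (x i) • y)))) := rfl

lemma r_comp_T (hφ : ‖φ‖ ≤ 1) (hy : φ y = 1) (hy1 : ‖y‖ = 1) {n : ℕ}
    {A : ContinuousMultilinearMap 𝕜 (fun _ : Fin n => E) F}
    (hA : ∀ (σ : Equiv.Perm (Fin n)) (v : Fin n → E), A (v ∘ σ) = A v) :
    rclm φ y hφ hy1 n (Tclm φ n A) = A := by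
  ext x
  rw [rclm_apply]
  have hstep : ∀ S : Finset (Fin n),
      Tclm φ n A (Fin.cons y (S.piecewise (fun _ => y) (fun i => x i - φ (x i) • y)))
        = ((S.card : 𝕜) + 1) • A (S.piecewise (fun _ => y) (fun i => x i - φ (x i) • y)) := by
    intro S
    set w : Fin n → E := S.piecewise (fun _ => y) (fun i => x i - φ (x i) • y) with hwdef
    rw [T_cons φ y A w, hy, one_smul]
    have hterm : ∀ j : Fin n, φ (w j) • A (Fin.cons y w ∘ (j.succ).succAbove)
        = if j ∈ S then A w else 0 := by
      intro j
      by_cases hj : j ∈ S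
      · have hwj : w j = y := by rw [hwdef]; exact Finset.piecewise_eq_of_mem _ _ _ hj
        rw [if_pos hj, hwj, hy, one_smul, A_drop y hA w j hwj]
      · have hwj : w j = x j - φ (x j) • y := by
          rw [hwdef]; exact Finset.piecewise_eq_of_notMem _ _ _ hj
        have hφw : φ (w j) = 0 := by
          rw [hwj, map_sub, map_smul, smul_eq_mul, hy, mul_one, sub_self]
        rw [if_neg hj, hφw, zero_smul]
    rw [Finset.sum_congr rfl (fun j _ => hterm j), Finset.sum_ite_mem, Finset.univ_inter,
      Finset.sum_const, ← Nat.cast_smul_eq_nsmul 𝕜, add_smul, one_smul]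
    exact add_comm _ _
  have hterm2 : ∀ s : Finset (Fin n),
      A (s.piecewise (fun i => φ (x i) • y) (fun i => x i - φ (x i) • y))
        = (∏ i ∈ s, φ (x i)) • A (s.piecewise (fun _ => y) (fun i => x i - φ (x i) • y)) := by
    intro s
    have hmps := A.map_piecewise_smul (fun i => φ (x i))
      (s.piecewise (fun _ => y) (fun i => x i - φ (x i) • y)) s
    have harg : s.piecewise
        (fun i => φ (x i) • (s.piecewise (fun _ => y) (fun i => x i - φ (x i) • y)) i)
        (s.piecewise (fun _ => y) (fun i => x i - φ (x i) • y))
        = s.piecewise (fun i => φ (x i) • y) (fun i => x i - φ (x i) • y) := by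
      funext i
      by_cases hi : i ∈ s
      · rw [Finset.piecewise_eq_of_mem _ _ _ hi, Finset.piecewise_eq_of_mem _ _ _ hi,
          Finset.piecewise_eq_of_mem _ _ _ hi]
      · rw [Finset.piecewise_eq_of_notMem _ _ _ hi, Finset.piecewise_eq_of_notMem _ _ _ hi,
          Finset.piecewise_eq_of_notMem _ _ _ hi]
    rw [harg] at hmps
    exact hmps
  have hexp := A.map_add_univ (fun i => φ (x i) • y) (fun i => x i - φ (x i) • y)
  have hu : ((fun i => φ (x i) • y) + fun i => x i - φ (x i) • y) = x := by
    funext i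
    simp
  rw [hu] at hexp
  calc ∑ S : Finset (Fin n), ((S.card : 𝕜) + 1)⁻¹ • ((∏ i ∈ S, φ (x i)) •
        Tclm φ n A (Fin.cons y (S.piecewise (fun _ => y) (fun i => x i - φ (x i) • y))))
      = ∑ S : Finset (Fin n), (∏ i ∈ S, φ (x i)) •
          A (S.piecewise (fun _ => y) (fun i => x i - φ (x i) • y)) := by
        refine Finset.sum_congr rfl fun S _ => ?_
        rw [hstep S, smul_comm (∏ i ∈ S, φ (x i)) ((S.card : 𝕜) + 1),
          inv_smul_smul₀ (Nat.cast_add_one_ne_zero S.card)]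
    _ = ∑ S : Finset (Fin n),
          A (S.piecewise (fun i => φ (x i) • y) (fun i => x i - φ (x i) • y)) :=
        Finset.sum_congr rfl fun s _ => (hterm2 s).symm
    _ = A x := hexp.symm

lemma mem_Pw {n : ℕ} {A : ContinuousMultilinearMap 𝕜 (fun _ : Fin n => E) F} :
    A ∈ Pw 𝕜 E F n ↔ ((∀ (σ : Equiv.Perm (Fin n)) (v : Fin n → E), A (v ∘ σ) = A v) ∧
      WCB 𝕜 E F (fun x => A fun _ => x)) := Iff.rfl

private def evalCLM {n : ℕ} (w : Fin n → E) :
    ContinuousMultilinearMap 𝕜 (fun _ : Fin n => E) F →L[𝕜] F :=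
  LinearMap.mkContinuous
    { toFun := fun A => A w
      map_add' := fun A B => rfl
      map_smul' := fun c A => rfl }
    (∏ i, ‖w i‖) (fun A => (A.le_opNorm w).trans (le_of_eq (mul_comm _ _)))

lemma isClosed_Pw (n : ℕ) :
    IsClosed ((Pw 𝕜 E F n :
        Submodule 𝕜 (ContinuousMultilinearMap 𝕜 (fun _ : Fin n => E) F)) :
      Set (ContinuousMultilinearMap 𝕜 (fun _ : Fin n => E) F)) := by
  have h1 : IsClosed {A : ContinuousMultilinearMap 𝕜 (fun _ : Fin n => E) F |
      ∀ (σ : Equiv.Perm (Fin n)) (v : Fin n → E), A (v ∘ σ) = A v} := by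
    have he : {A : ContinuousMultilinearMap 𝕜 (fun _ : Fin n => E) F |
        ∀ (σ : Equiv.Perm (Fin n)) (v : Fin n → E), A (v ∘ σ) = A v}
        = ⋂ (σ : Equiv.Perm (Fin n)), ⋂ (v : Fin n → E),
            {A : ContinuousMultilinearMap 𝕜 (fun _ : Fin n => E) F | A (v ∘ σ) = A v} := by
      ext A
      simp [Set.mem_iInter]
    rw [he]
    exact isClosed_iInter fun σ => isClosed_iInter fun v =>
      isClosed_eq (evalCLM (F := F) (v ∘ σ)).continuous (evalCLM (F := F) v).continuous
  have h2 : IsClosed {A : ContinuousMultilinearMap 𝕜 (fun _ : Fin n => E) F |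
      WCB 𝕜 E F (fun x => A fun _ => x)} := by
    refine isClosed_of_closure_subset (fun A hA => ?_)
    intro Bs hBs
    obtain ⟨R0, hR0⟩ := isBounded_iff_forall_norm_le.1 hBs
    set R : ℝ := max R0 0 with hRdef
    obtain ⟨u, humem, hulim⟩ := mem_closure_iff_seq_limit.1 hA
    have htu : TendstoUniformlyOn (fun (k : ℕ) (x : WeakSpace 𝕜 E) => (u k) (fun _ => x))
        (fun x : WeakSpace 𝕜 E => A (fun _ => x)) atTop (Bs : Set (WeakSpace 𝕜 E)) := by
      refine Metric.tendstoUniformlyOn_iff.2 ?_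
      intro ε hε
      have hδpos : 0 < ε / (R ^ n + 1) := by positivity
      have hev : ∀ᶠ k in atTop, dist (u k) A < ε / (R ^ n + 1) :=
        (Metric.tendsto_nhds.1 hulim) _ hδpos
      filter_upwards [hev] with k hk z hz
      have hzR := (hR0 z hz).trans (le_max_left R0 0)
      have hlt : ‖A - u k‖ < ε / (R ^ n + 1) := by
        rw [norm_sub_rev, ← dist_eq_norm]
        exact hk
      calc dist (A fun _ => z) (u k fun _ => z)
          = ‖(A - u k) fun _ => z‖ := by
            rw [dist_eq_norm]; rfl
        _ ≤ ‖A - u k‖ * R ^ n := by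
            refine le_trans ((A - u k).le_opNorm (fun _ => z)) ?_
            rw [Finset.prod_const, Finset.card_univ, Fintype.card_fin]
            exact mul_le_mul_of_nonneg_left
              (pow_le_pow_left₀ (norm_nonneg _) hzR n) (norm_nonneg _)
        _ ≤ ‖A - u k‖ * (R ^ n + 1) := by
            nlinarith [norm_nonneg (A - u k)]
        _ < (ε / (R ^ n + 1)) * (R ^ n + 1) := by
            exact mul_lt_mul_of_pos_right hlt (by positivity)
        _ = ε := div_mul_cancel₀ ε (by positivity)
    exact htu.continuousOn (Filter.Eventually.of_forall fun k => (humem k) Bs hBs).frequently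
  exact h1.inter h2

/-- The step embedding `P_w(ⁿE;F) → P_w(ⁿ⁺¹E;F)`. -/
def estep (n : ℕ) : ↥(Pw 𝕜 E F n) →L[𝕜] ↥(Pw 𝕜 E F (n + 1)) :=
  ((Tclm φ n).comp (Pw 𝕜 E F n).subtypeL).codRestrict (Pw 𝕜 E F (n + 1))
    (fun Q => mem_Pw.2 ⟨Tclm_symm φ (mem_Pw.1 Q.2).1, wcb_Tclm φ (mem_Pw.1 Q.2).2⟩)

lemma estep_val {n : ℕ} (Q : ↥(Pw 𝕜 E F n)) :
    ((estep φ n Q :  ↥(Pw 𝕜 E F (n + 1))) :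
      ContinuousMultilinearMap 𝕜 (fun _ : Fin (n+1) => E) F) = Tclm φ n (Q :
      ContinuousMultilinearMap 𝕜 (fun _ : Fin n => E) F) := rfl

lemma estep_lower (hφ : ‖φ‖ ≤ 1) (hy : φ y = 1) (hy1 : ‖y‖ = 1) (n : ℕ)
    (Q : ↥(Pw 𝕜 E F n)) : ‖Q‖ ≤ ((n : ℝ) + 1) ^ n * ‖estep φ n Q‖ := by
  have h := Tclm_lower φ y hφ hy hy1 (mem_Pw.1 Q.2).1
  have h1 : ‖Q‖ = ‖(Q : ContinuousMultilinearMap 𝕜 (fun _ : Fin n => E) F)‖ := rfl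
  have h2 : ‖estep φ n Q‖ = ‖Tclm φ n (Q : ContinuousMultilinearMap 𝕜 (fun _ : Fin n => E) F)‖ :=
    rfl
  rw [h1, h2]
  exact h

lemma estep_closed_range (hφ : ‖φ‖ ≤ 1) (hy : φ y = 1) (hy1 : ‖y‖ = 1) (n : ℕ) :
    IsClosed (Set.range (estep (𝕜 := 𝕜) (E := E) (F := F) φ n)) := by
  have hrange : Set.range (estep (𝕜 := 𝕜) (E := E) (F := F) φ n)
      = {B : ↥(Pw 𝕜 E F (n + 1)) |
          Tclm φ n (rclm φ y hφ hy1 n (B : ContinuousMultilinearMap 𝕜 (fun _ : Fin (n+1) => E) F))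
            = (B : ContinuousMultilinearMap 𝕜 (fun _ : Fin (n+1) => E) F)}
        ∩ {B : ↥(Pw 𝕜 E F (n + 1)) |
            rclm φ y hφ hy1 n (B : ContinuousMultilinearMap 𝕜 (fun _ : Fin (n+1) => E) F)
              ∈ Pw 𝕜 E F n} := by
    ext B
    constructor
    · rintro ⟨Q, rfl⟩
      have h1 : rclm φ y hφ hy1 n
          ((estep φ n Q :  ↥(Pw 𝕜 E F (n + 1))) :
            ContinuousMultilinearMap 𝕜 (fun _ : Fin (n+1) => E) F)
          = (Q : ContinuousMultilinearMap 𝕜 (fun _ : Fin n => E) F) := by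
        rw [estep_val]
        exact r_comp_T φ y hφ hy hy1 (mem_Pw.1 Q.2).1
      constructor
      · show Tclm φ n _ = _
        rw [h1, estep_val]
      · simp only [Set.mem_setOf_eq]
        rw [h1]
        exact Q.2
    · rintro ⟨hB1, hB2⟩
      refine ⟨⟨rclm φ y hφ hy1 n
        (B : ContinuousMultilinearMap 𝕜 (fun _ : Fin (n+1) => E) F), hB2⟩, ?_⟩
      apply Subtype.ext
      rw [estep_val]
      exact hB1
  rw [hrange]
  refine IsClosed.inter ?_ ?_
  · exact isClosed_eq
      (((Tclm φ n).continuous.comp (rclm φ y hφ hy1 n).continuous).comp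
        continuous_subtype_val)
      continuous_subtype_val
  · exact (isClosed_Pw n).preimage
      ((rclm φ y hφ hy1 n).continuous.comp continuous_subtype_val)

lemma comp_closed {X Y : Type*} [NormedAddCommGroup X] [NormedSpace 𝕜 X]
    [NormedAddCommGroup Y] [NormedSpace 𝕜 Y]
    (f : X →L[𝕜] Y) (c : ℝ) (hc : 0 < c) (hf : ∀ x, ‖x‖ ≤ c * ‖f x‖)
    (hrange : IsClosed (Set.range f)) {C : Set X} (hC : IsClosed C) :
    IsClosed (f '' C) := by
  refine isClosed_of_closure_subset fun b hb => ?_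
  have hbr : b ∈ Set.range f := hrange.closure_subset
    (closure_mono (Set.image_subset_range f C) hb)
  obtain ⟨a, rfl⟩ := hbr
  refine ⟨a, ?_, rfl⟩
  have ha : a ∈ closure C := by
    rw [Metric.mem_closure_iff]
    intro ε hε
    rw [Metric.mem_closure_iff] at hb
    obtain ⟨w, hwmem, hwd⟩ := hb (ε / c) (by positivity)
    obtain ⟨x, hxC, rfl⟩ := hwmem
    refine ⟨x, hxC, ?_⟩
    have h1 : ‖a - x‖ ≤ c * ‖f (a - x)‖ := hf _
    rw [map_sub] at h1
    calc dist a x = ‖a - x‖ := dist_eq_norm _ _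
      _ ≤ c * ‖f a - f x‖ := h1
      _ = c * dist (f a) (f x) := by rw [dist_eq_norm]
      _ < c * (ε / c) := mul_lt_mul_of_pos_left hwd hc
      _ = ε := by field_simp
  exact hC.closure_subset ha

end Stmt8Aux

theorem stmt8 {𝕜 E F : Type*} [RCLike 𝕜] [NormedAddCommGroup E] [NormedSpace 𝕜 E]
    [NormedAddCommGroup F] [NormedSpace 𝕜 F] [Nontrivial E]
    (n m : ℕ) (hnm : n ≤ m) :
    ∃ (e : Pw 𝕜 E F n →L[𝕜] Pw 𝕜 E F m) (c : ℝ), 0 < c ∧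
      (∀ Q : Pw 𝕜 E F n, ‖Q‖ ≤ c * ‖e Q‖) ∧ IsClosed (Set.range e) := by
  obtain ⟨x0, hx0⟩ := exists_ne (0 : E)
  obtain ⟨φ, hφ1, hφx⟩ := exists_dual_vector 𝕜 x0 (norm_ne_zero_iff.2 hx0)
  have hφ : ‖φ‖ ≤ 1 := le_of_eq hφ1
  set y : E := ((‖x0‖ : ℝ) : 𝕜)⁻¹ • x0 with hydef
  have hn0 : ((‖x0‖ : ℝ) : 𝕜) ≠ 0 := by
    simp only [ne_eq, RCLike.ofReal_eq_zero, norm_eq_zero]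
    exact hx0
  have hy : φ y = 1 := by
    rw [hydef, map_smul, hφx, smul_eq_mul, inv_mul_cancel₀ hn0]
  have hy1 : ‖y‖ = 1 := by
    rw [hydef, norm_smul, norm_inv, RCLike.norm_ofReal, abs_of_nonneg (norm_nonneg x0),
      inv_mul_cancel₀ (norm_ne_zero_iff.2 hx0)]
  induction m, hnm using Nat.le_induction with
  | base =>
    refine ⟨ContinuousLinearMap.id 𝕜 _, 1, one_pos, fun Q => by simp, ?_⟩
    have : Set.range (ContinuousLinearMap.id 𝕜 (↥(Pw 𝕜 E F n))) = Set.univ := by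
      simp [ContinuousLinearMap.coe_id]
    rw [this]
    exact isClosed_univ
  | succ m hm ih =>
    obtain ⟨e₁, c₁, hc₁, hle₁, hcl₁⟩ := ih
    set e₂ := Stmt8Aux.estep (𝕜 := 𝕜) (E := E) (F := F) φ m with he2
    have hle₂ : ∀ Q : ↥(Pw 𝕜 E F m), ‖Q‖ ≤ ((m : ℝ) + 1) ^ m * ‖e₂ Q‖ :=
      fun Q => Stmt8Aux.estep_lower φ y hφ hy hy1 m Q
    have hcl₂ : IsClosed (Set.range e₂) := Stmt8Aux.estep_closed_range φ y hφ hy hy1 m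
    have hpos : (0 : ℝ) < ((m : ℝ) + 1) ^ m := by positivity
    refine ⟨e₂.comp e₁, (((m : ℝ) + 1) ^ m) * c₁, mul_pos hpos hc₁, fun Q => ?_, ?_⟩
    · calc ‖Q‖ ≤ c₁ * ‖e₁ Q‖ := hle₁ Q
        _ ≤ c₁ * (((m : ℝ) + 1) ^ m * ‖e₂ (e₁ Q)‖) :=
            mul_le_mul_of_nonneg_left (hle₂ (e₁ Q)) hc₁.le
        _ = (((m : ℝ) + 1) ^ m * c₁) * ‖(e₂.comp e₁) Q‖ := by
            rw [ContinuousLinearMap.comp_apply]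
            ring
    · have hr : Set.range (e₂.comp e₁) = e₂ '' (Set.range e₁) := by
        rw [ContinuousLinearMap.coe_comp', Set.range_comp]
      rw [hr]
      have := @Stmt8Aux.comp_closed 𝕜 _ (↥(Pw 𝕜 E F m)) (↥(Pw 𝕜 E F (m+1))) _ _ _ _
      exact this e₂ _ hpos hle₂ hcl₂ hcl₁
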